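/- In the diploid Wright-Fisher model with n individuals, for each time t ≥ 2, the function k ↦ (1/k)·E[Q_t^i | G_t^i = k] is strictly increasing in k for 1 ≤ k ≤ n; in particular the expected number of descendant alleles grows super-linearly in the number of genealogical descendants. -/

import Mathlib

open Finset

/-- Sample space of the diploid Wright–Fisher model with `n` individuals run for `T`
generation steps: each individual of each generation `t+1` (step `t < T`) selects, for
each of its two allele slots, a uniformly chosen allele (parent individual together
with one of that parent's two alleles) of the previous generation, independently. -/
abbrev WFOmega (n T : ℕ) := Fin T → Fin n → Fin 2 → Fin n × Fin 2

/-- The set of generation-`t` alleles descended from the two alleles of `I_{0,i}`. -/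
def ancAlleles (n T : ℕ) (i : Fin n) (ω : WFOmega n T) : ℕ → Set (Fin n × Fin 2)
  | 0 => {a | a.1 = i}
  | t + 1 => {a | ∃ h : t < T, ω ⟨t, h⟩ a.1 a.2 ∈ ancAlleles n T i ω t}

/-- `Q_t^i`, the number of generation-`t` descendant alleles of individual `I_{0,i}`. -/
noncomputable def Qd (n T : ℕ) (i : Fin n) (ω : WFOmega n T) (t : ℕ) : ℕ :=
  (ancAlleles n T i ω t).ncard

/-- The set of generation-`t` genealogical descendants of individual `I_{0,i}`. -/
def descIndiv (n T : ℕ) (i : Fin n) (ω : WFOmega n T) : ℕ → Set (Fin n)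
  | 0 => {i}
  | t + 1 => {j | ∃ h : t < T, ∃ c : Fin 2, (ω ⟨t, h⟩ j c).1 ∈ descIndiv n T i ω t}

/-- `G_t^i`, the number of generation-`t` genealogical descendants of `I_{0,i}`. -/
noncomputable def Gd (n T : ℕ) (i : Fin n) (ω : WFOmega n T) (t : ℕ) : ℕ :=
  (descIndiv n T i ω t).ncard

open Classical in
/-- Conditional expectation of `X` given the event `A`, under the uniform
distribution on the finite sample space `Ω`. -/
noncomputable def uCondExp {Ω : Type*} [Fintype Ω] (X : Ω → ℝ) (A : Ω → Prop) : ℝ :=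
  (∑ ω ∈ Finset.univ.filter A, X ω) / (Finset.univ.filter A).card


namespace WFaux

variable (n : ℕ)

def aN (g : ℕ) : ℕ := 4*g*(2*n - g)
def bN (g : ℕ) : ℕ := (2*(n - g))^2

lemma aN_add_bN {g : ℕ} (h : g ≤ n) : aN n g + bN n g = (2*n)^2 := by
  obtain ⟨d, rfl⟩ := Nat.exists_eq_add_of_le h
  have h1 : 2*(g+d) - g = g + 2*d := by omega
  have h2 : g + d - g = d := by omega
  simp only [aN, bN, h1, h2]
  ring

lemma cnt_pair_not (D : Finset (Fin n)) :
    ∑ z : Fin n × Fin 2, (if z.1 ∉ D then (1:ℕ) else 0) = 2*(n - D.card) := by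
  rw [Fintype.sum_prod_type]
  have : ∀ p : Fin n, ∑ _c : Fin 2, (if p ∉ D then (1:ℕ) else 0) = if p ∉ D then 2 else 0 := by
    intro p; by_cases h : p ∉ D <;> simp [h]
  rw [Finset.sum_congr rfl fun p _ => this p, Finset.sum_ite, Finset.sum_const, Finset.sum_const]
  have : Finset.univ.filter (fun p : Fin n => p ∉ D) = Dᶜ := by
    ext p; simp
  rw [this, Finset.card_compl, Fintype.card_fin]
  simp [mul_comm]

lemma cnt_pair_mem (D : Finset (Fin n)) :
    ∑ z : Fin n × Fin 2, (if z.1 ∈ D then (1:ℕ) else 0) = 2*D.card := by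
  rw [Fintype.sum_prod_type]
  have : ∀ p : Fin n, ∑ _c : Fin 2, (if p ∈ D then (1:ℕ) else 0) = if p ∈ D then 2 else 0 := by
    intro p; by_cases h : p ∈ D <;> simp [h]
  rw [Finset.sum_congr rfl fun p _ => this p, Finset.sum_ite, Finset.sum_const, Finset.sum_const]
  rw [Finset.filter_mem_eq_inter, Finset.univ_inter]
  simp [mul_comm]

lemma sum_pi_prod {κ : Type*} [Fintype κ] [DecidableEq κ] {β : Type*} [Fintype β]
    (f : κ → β → ℕ) :
    ∑ y : κ → β, ∏ c : κ, f c (y c) = ∏ c : κ, ∑ z : β, f c z := by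
  rw [Finset.prod_univ_sum]
  rw [Fintype.piFinset_univ]

lemma cnt_not (D : Finset (Fin n)) :
    ∑ y : Fin 2 → Fin n × Fin 2, (if (∀ c, (y c).1 ∉ D) then (1:ℕ) else 0) = bN n D.card := by
  have h1 : ∀ y : Fin 2 → Fin n × Fin 2,
      (if (∀ c, (y c).1 ∉ D) then (1:ℕ) else 0)
        = ∏ c : Fin 2, (if (y c).1 ∉ D then (1:ℕ) else 0) := by
    intro y; rw [Finset.prod_boole]; simp
  rw [Finset.sum_congr rfl fun y _ => h1 y,
    sum_pi_prod (fun (c : Fin 2) (z : Fin n × Fin 2) => if z.1 ∉ D then (1:ℕ) else 0)]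
  rw [Finset.prod_congr rfl fun c _ => cnt_pair_not n D]
  simp [bN, sq]

lemma cnt_ex (D : Finset (Fin n)) :
    ∑ y : Fin 2 → Fin n × Fin 2, (if (∃ c, (y c).1 ∈ D) then (1:ℕ) else 0) = aN n D.card := by
  have hcard : D.card ≤ n := by
    simpa using Finset.card_le_card (Finset.subset_univ D)
  have htot : ∑ y : Fin 2 → Fin n × Fin 2,
      ((if (∃ c, (y c).1 ∈ D) then (1:ℕ) else 0) + (if (∀ c, (y c).1 ∉ D) then (1:ℕ) else 0))
      = (2*n)^2 := by
    have hy : ∀ y : Fin 2 → Fin n × Fin 2,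
        ((if (∃ c, (y c).1 ∈ D) then (1:ℕ) else 0) + (if (∀ c, (y c).1 ∉ D) then (1:ℕ) else 0)) = 1 := by
      intro y
      by_cases h : ∃ c, (y c).1 ∈ D
      · have h2 : ¬ (∀ c, (y c).1 ∉ D) := by push_neg; exact h
        simp [h, h2]
      · have h2 : ∀ c, (y c).1 ∉ D := by push_neg at h; exact h
        simp [h, h2]
    rw [Finset.sum_congr rfl fun y _ => hy y]
    simp only [Finset.sum_const, smul_eq_mul, mul_one, Finset.card_univ]
    rw [Fintype.card_fun]
    simp only [Fintype.card_prod, Fintype.card_fin]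
    ring
  rw [Finset.sum_add_distrib, cnt_not] at htot
  have h2 := aN_add_bN n hcard
  exact Nat.add_right_cancel (htot.trans h2.symm)

/-- indicator of `card = g'` expanded over possible fibers -/
lemma ite_card_expand {α M : Type*} [Fintype α] [DecidableEq α] [AddCommMonoid M]
    (S : Finset α) (g' : ℕ) (x : M) :
    (if S.card = g' then x else 0)
      = ∑ E ∈ Finset.powersetCard g' (Finset.univ : Finset α), (if S = E then x else 0) := by
  by_cases h : S.card = g'
  · rw [if_pos h, Finset.sum_eq_single S]
    · rw [if_pos rfl]
    · intro E _ hne; rw [if_neg (fun he => hne he.symm)]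
    · intro hnm; exact absurd (Finset.mem_powersetCard.mpr ⟨Finset.subset_univ S, h⟩) hnm
  · rw [if_neg h]
    exact (Finset.sum_eq_zero fun E hE => by
      rw [if_neg]; intro he; subst he; exact h (Finset.mem_powersetCard.mp hE).2).symm

lemma eq_filter_iff {σ : Fin n → Fin 2 → Fin n × Fin 2} {D : Finset (Fin n)} {E : Finset (Fin n)} :
    (Finset.univ.filter fun j => ∃ c, (σ j c).1 ∈ D) = E
      ↔ ∀ j, ((∃ c, (σ j c).1 ∈ D) ↔ j ∈ E) := by
  rw [Finset.ext_iff]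
  constructor
  · intro h j; have := h j; simpa using this
  · intro h j; simpa using h j

lemma C1 (D : Finset (Fin n)) (g' : ℕ) :
    ∑ σ : Fin n → Fin 2 → Fin n × Fin 2,
      (if (Finset.univ.filter fun j => ∃ c, (σ j c).1 ∈ D).card = g' then (1:ℕ) else 0)
      = n.choose g' * aN n D.card ^ g' * bN n D.card ^ (n - g') := by
  have step1 : ∀ σ : Fin n → Fin 2 → Fin n × Fin 2,
      (if (Finset.univ.filter fun j => ∃ c, (σ j c).1 ∈ D).card = g' then (1:ℕ) else 0)
      = ∑ E ∈ Finset.powersetCard g' (Finset.univ : Finset (Fin n)),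
          ∏ j : Fin n, (if ((∃ c, (σ j c).1 ∈ D) ↔ j ∈ E) then (1:ℕ) else 0) := by
    intro σ
    rw [ite_card_expand]
    refine Finset.sum_congr rfl fun E _ => ?_
    rw [Finset.prod_boole]
    congr 1
    simp only [Finset.mem_univ, true_implies]
    rw [eq_filter_iff]
  rw [Finset.sum_congr rfl fun σ _ => step1 σ, Finset.sum_comm]
  have step2 : ∀ E ∈ Finset.powersetCard g' (Finset.univ : Finset (Fin n)),
      (∑ σ : Fin n → Fin 2 → Fin n × Fin 2,
        ∏ j : Fin n, (if ((∃ c, (σ j c).1 ∈ D) ↔ j ∈ E) then (1:ℕ) else 0))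
      = aN n D.card ^ g' * bN n D.card ^ (n - g') := by
    intro E hE
    obtain ⟨-, hEcard⟩ := Finset.mem_powersetCard.mp hE
    rw [sum_pi_prod (fun (j : Fin n) (y : Fin 2 → Fin n × Fin 2) =>
      if ((∃ c, (y c).1 ∈ D) ↔ j ∈ E) then (1:ℕ) else 0)]
    have hper : ∀ j : Fin n,
        (∑ y : Fin 2 → Fin n × Fin 2, if ((∃ c, (y c).1 ∈ D) ↔ j ∈ E) then (1:ℕ) else 0)
        = if j ∈ E then aN n D.card else bN n D.card := by
      intro j
      by_cases hj : j ∈ E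
      · rw [if_pos hj, ← cnt_ex n D]
        exact Finset.sum_congr rfl fun y _ => by simp [hj]
      · rw [if_neg hj, ← cnt_not n D]
        refine Finset.sum_congr rfl fun y _ => ?_
        simp only [hj, iff_false, not_exists]
    rw [Finset.prod_congr rfl fun j _ => hper j, Finset.prod_ite, Finset.prod_const,
      Finset.prod_const, Finset.filter_mem_eq_inter, Finset.univ_inter, hEcard]
    have hcompl : Finset.univ.filter (fun j : Fin n => j ∉ E) = Eᶜ := by ext j; simp
    rw [hcompl, Finset.card_compl, Fintype.card_fin, hEcard]
  rw [Finset.sum_congr rfl step2, Finset.sum_const, Finset.card_powersetCard, Finset.card_univ,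
    Fintype.card_fin, smul_eq_mul, mul_assoc]

/-- summing a function of one coordinate over the function space `Fin 2 → β` -/
lemma sum_eval {β : Type*} [Fintype β] (c : Fin 2) (f : β → ℕ) :
    ∑ y : Fin 2 → β, f (y c) = (Fintype.card β) * ∑ z : β, f z := by
  classical
  have hcard : Fintype.card ({j : Fin 2 // j ≠ c} → β) = Fintype.card β := by
    rw [Fintype.card_fun]
    have : Fintype.card {j : Fin 2 // j ≠ c} = 1 := by
      rw [Fintype.card_subtype_compl, Fintype.card_subtype_eq]
      simp
    rw [this, pow_one]
  have heq := Fintype.sum_bijective (Equiv.piSplitAt c fun _ => β)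
    (Equiv.piSplitAt c fun _ => β).bijective (fun y : Fin 2 → β => f (y c))
    (fun p => f p.1) (fun y => rfl)
  rw [heq, Fintype.sum_prod_type]
  simp only [Finset.sum_const, Finset.card_univ, smul_eq_mul]
  rw [← Finset.mul_sum, hcard]

lemma sum_ind_mem (A : Finset (Fin n × Fin 2)) :
    ∑ z : Fin n × Fin 2, (if z ∈ A then (1:ℕ) else 0) = A.card := by
  simp [Finset.sum_ite_mem]

lemma cnt_exA (D : Finset (Fin n)) (A : Finset (Fin n × Fin 2)) (hA : ∀ a ∈ A, a.1 ∈ D) :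
    ∑ y : Fin 2 → Fin n × Fin 2,
      (if (∃ c, (y c).1 ∈ D) then (1:ℕ) else 0) * (∑ c : Fin 2, if y c ∈ A then (1:ℕ) else 0)
      = 4*n*A.card := by
  have h1 : ∀ y : Fin 2 → Fin n × Fin 2,
      (if (∃ c, (y c).1 ∈ D) then (1:ℕ) else 0) * (∑ c : Fin 2, if y c ∈ A then (1:ℕ) else 0)
      = ∑ c : Fin 2, if y c ∈ A then (1:ℕ) else 0 := by
    intro y
    by_cases h : ∃ c, (y c).1 ∈ D
    · rw [if_pos h, one_mul]
    · rw [if_neg h, zero_mul]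
      symm
      refine Finset.sum_eq_zero fun c _ => ?_
      rw [if_neg]
      intro hc
      exact h ⟨c, hA _ hc⟩
  rw [Finset.sum_congr rfl fun y _ => h1 y, Finset.sum_comm]
  have h2 : ∀ c : Fin 2,
      ∑ y : Fin 2 → Fin n × Fin 2, (if y c ∈ A then (1:ℕ) else 0) = 2*n*A.card := by
    intro c
    rw [sum_eval c (fun z => if z ∈ A then (1:ℕ) else 0), sum_ind_mem,
      Fintype.card_prod, Fintype.card_fin, Fintype.card_fin]
    ring
  rw [Finset.sum_congr rfl fun c _ => h2 c, Finset.sum_const, Finset.card_univ,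
    Fintype.card_fin, smul_eq_mul]
  ring

lemma cnt_notA (D : Finset (Fin n)) (A : Finset (Fin n × Fin 2)) (hA : ∀ a ∈ A, a.1 ∈ D) :
    ∑ y : Fin 2 → Fin n × Fin 2,
      (if (∀ c, (y c).1 ∉ D) then (1:ℕ) else 0) * (∑ c : Fin 2, if y c ∈ A then (1:ℕ) else 0)
      = 0 := by
  refine Finset.sum_eq_zero fun y _ => ?_
  by_cases h : ∀ c, (y c).1 ∉ D
  · rw [if_pos h, one_mul]
    refine Finset.sum_eq_zero fun c _ => ?_
    rw [if_neg]; intro hc; exact h c (hA _ hc)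
  · rw [if_neg h, zero_mul]

lemma C2 (D : Finset (Fin n)) (A : Finset (Fin n × Fin 2)) (hA : ∀ a ∈ A, a.1 ∈ D)
    (g' : ℕ) (hg' : 1 ≤ g') :
    ∑ σ : Fin n → Fin 2 → Fin n × Fin 2,
      (if (Finset.univ.filter fun j => ∃ c, (σ j c).1 ∈ D).card = g'
        then (Finset.univ.filter fun jc : Fin n × Fin 2 => σ jc.1 jc.2 ∈ A).card else 0)
    = g' * (n.choose g' * (4*n) * aN n D.card ^ (g'-1) * bN n D.card ^ (n - g')) * A.card := by
  -- abbreviations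
  set q := A.card with hq
  -- rewrite the inner card as a double sum
  have hX : ∀ σ : Fin n → Fin 2 → Fin n × Fin 2,
      (Finset.univ.filter fun jc : Fin n × Fin 2 => σ jc.1 jc.2 ∈ A).card
        = ∑ j : Fin n, ∑ c : Fin 2, (if σ j c ∈ A then (1:ℕ) else 0) := by
    intro σ
    rw [Finset.card_filter]
    exact Fintype.sum_prod_type _
  have step1 : ∀ σ : Fin n → Fin 2 → Fin n × Fin 2,
      (if (Finset.univ.filter fun j => ∃ c, (σ j c).1 ∈ D).card = g'
        then (Finset.univ.filter fun jc : Fin n × Fin 2 => σ jc.1 jc.2 ∈ A).card else 0)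
      = ∑ E ∈ Finset.powersetCard g' (Finset.univ : Finset (Fin n)),
          ∑ j0 : Fin n,
            ∏ j : Fin n, ((if ((∃ c, (σ j c).1 ∈ D) ↔ j ∈ E) then (1:ℕ) else 0)
              * (if j = j0 then (∑ c : Fin 2, if σ j c ∈ A then (1:ℕ) else 0) else 1)) := by
    intro σ
    rw [ite_card_expand]
    refine Finset.sum_congr rfl fun E _ => ?_
    have : (if (Finset.univ.filter fun j => ∃ c, (σ j c).1 ∈ D) = E
        then (Finset.univ.filter fun jc : Fin n × Fin 2 => σ jc.1 jc.2 ∈ A).card else 0)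
        = (∏ j : Fin n, if ((∃ c, (σ j c).1 ∈ D) ↔ j ∈ E) then (1:ℕ) else 0)
          * ∑ j0 : Fin n, ∑ c : Fin 2, (if σ j0 c ∈ A then (1:ℕ) else 0) := by
      rw [Finset.prod_boole]
      by_cases h : (Finset.univ.filter fun j => ∃ c, (σ j c).1 ∈ D) = E
      · rw [if_pos h, if_pos, one_mul, hX σ]
        simp only [Finset.mem_univ, true_implies]
        exact (eq_filter_iff n).mp h
      · rw [if_neg h, if_neg, zero_mul]
        intro hall
        exact h ((eq_filter_iff n).mpr fun j => hall j (Finset.mem_univ j))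
    rw [this, Finset.mul_sum]
    refine Finset.sum_congr rfl fun j0 _ => ?_
    rw [Finset.prod_mul_distrib, Finset.prod_ite_eq' Finset.univ j0
      (fun j => (∑ c : Fin 2, if σ j c ∈ A then (1:ℕ) else 0))]
    simp
  rw [Finset.sum_congr rfl fun σ _ => step1 σ, Finset.sum_comm]
  have step2 : ∀ E ∈ Finset.powersetCard g' (Finset.univ : Finset (Fin n)),
      (∑ σ : Fin n → Fin 2 → Fin n × Fin 2, ∑ j0 : Fin n,
        ∏ j : Fin n, ((if ((∃ c, (σ j c).1 ∈ D) ↔ j ∈ E) then (1:ℕ) else 0)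
          * (if j = j0 then (∑ c : Fin 2, if σ j c ∈ A then (1:ℕ) else 0) else 1)))
      = g' * ((4*n) * aN n D.card ^ (g'-1) * bN n D.card ^ (n - g')) * q := by
    intro E hE
    obtain ⟨-, hEcard⟩ := Finset.mem_powersetCard.mp hE
    rw [Finset.sum_comm]
    have inner : ∀ j0 : Fin n,
        (∑ σ : Fin n → Fin 2 → Fin n × Fin 2,
          ∏ j : Fin n, ((if ((∃ c, (σ j c).1 ∈ D) ↔ j ∈ E) then (1:ℕ) else 0)
            * (if j = j0 then (∑ c : Fin 2, if σ j c ∈ A then (1:ℕ) else 0) else 1)))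
        = if j0 ∈ E then (4*n*q) * aN n D.card ^ (g'-1) * bN n D.card ^ (n - g') else 0 := by
      intro j0
      rw [sum_pi_prod (fun (j : Fin n) (y : Fin 2 → Fin n × Fin 2) =>
        (if ((∃ c, (y c).1 ∈ D) ↔ j ∈ E) then (1:ℕ) else 0)
          * (if j = j0 then (∑ c : Fin 2, if y c ∈ A then (1:ℕ) else 0) else 1))]
      have hval : ∀ j : Fin n,
          (∑ y : Fin 2 → Fin n × Fin 2,
            (if ((∃ c, (y c).1 ∈ D) ↔ j ∈ E) then (1:ℕ) else 0)
              * (if j = j0 then (∑ c : Fin 2, if y c ∈ A then (1:ℕ) else 0) else 1))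
          = if j = j0 then (if j0 ∈ E then 4*n*q else 0)
            else (if j ∈ E then aN n D.card else bN n D.card) := by
        intro j
        by_cases hj : j = j0
        · subst hj
          rw [if_pos rfl]
          by_cases hj0 : j ∈ E
          · rw [if_pos hj0, ← cnt_exA n D A hA]
            refine Finset.sum_congr rfl fun y _ => ?_
            simp [hj0]
          · rw [if_neg hj0]
            have hcongr : (∑ y : Fin 2 → Fin n × Fin 2,
                (if ((∃ c, (y c).1 ∈ D) ↔ j ∈ E) then (1:ℕ) else 0)
                  * (if j = j ∧ True then (∑ c : Fin 2, if y c ∈ A then (1:ℕ) else 0) else 1))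
                = ∑ y : Fin 2 → Fin n × Fin 2,
                  (if (∀ c, (y c).1 ∉ D) then (1:ℕ) else 0)
                    * (∑ c : Fin 2, if y c ∈ A then (1:ℕ) else 0) := by
              refine Finset.sum_congr rfl fun y _ => ?_
              by_cases hD : ∃ c, (y c).1 ∈ D
              · have hd2 : ¬ (∀ c, (y c).1 ∉ D) := by push_neg; exact hD
                simp [hD, hj0, hd2]
              · have hd2 : ∀ c, (y c).1 ∉ D := by push_neg at hD; exact hD
                simp [hD, hj0, hd2]
            have hfix : (∑ y : Fin 2 → Fin n × Fin 2,
                (if ((∃ c, (y c).1 ∈ D) ↔ j ∈ E) then (1:ℕ) else 0)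
                  * (if j = j then (∑ c : Fin 2, if y c ∈ A then (1:ℕ) else 0) else 1))
                = ∑ y : Fin 2 → Fin n × Fin 2,
                (if ((∃ c, (y c).1 ∈ D) ↔ j ∈ E) then (1:ℕ) else 0)
                  * (if j = j ∧ True then (∑ c : Fin 2, if y c ∈ A then (1:ℕ) else 0) else 1) := by
              simp
            rw [hfix, hcongr, cnt_notA n D A hA]
        · rw [if_neg hj]
          by_cases hjE : j ∈ E
          · rw [if_pos hjE, ← cnt_ex n D]
            refine Finset.sum_congr rfl fun y _ => by simp [hjE, hj]
          · rw [if_neg hjE, ← cnt_not n D]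
            refine Finset.sum_congr rfl fun y _ => by
              simp only [hjE, iff_false, hj, if_false, mul_one, not_exists]
      rw [Finset.prod_congr rfl fun j _ => hval j]
      by_cases hj0 : j0 ∈ E
      · have hprod : ∀ j ∈ Finset.univ.erase j0,
            (if j = j0 then (if j0 ∈ E then 4*n*q else 0)
              else (if j ∈ E then aN n D.card else bN n D.card))
            = if j ∈ E then aN n D.card else bN n D.card := by
          intro j hj
          rw [if_neg (Finset.mem_erase.mp hj).1]
        have herase : (∏ j ∈ Finset.univ.erase j0,
            (if j = j0 then (if j0 ∈ E then 4*n*q else 0)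
              else (if j ∈ E then aN n D.card else bN n D.card)))
            = aN n D.card ^ (g'-1) * bN n D.card ^ (n - g') := by
          rw [Finset.prod_congr rfl hprod, Finset.prod_ite, Finset.prod_const, Finset.prod_const]
          have h1 : (Finset.univ.erase j0).filter (fun j => j ∈ E) = E.erase j0 := by
            ext j; simp [Finset.mem_erase, and_comm]
          have h2 : (Finset.univ.erase j0).filter (fun j => j ∉ E) = Eᶜ := by
            ext j
            simp only [Finset.mem_filter, Finset.mem_erase, Finset.mem_univ, Finset.mem_compl,
              and_true, true_and]
            constructor
            · exact fun h => h.2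
            · intro h; exact ⟨fun he => h (he ▸ hj0), h⟩
          rw [h1, h2, Finset.card_erase_of_mem hj0, Finset.card_compl, Fintype.card_fin, hEcard]
        rw [← Finset.mul_prod_erase Finset.univ _ (Finset.mem_univ j0), herase, if_pos rfl,
          if_pos hj0, if_pos hj0]
        ring
      · simp only [hj0, if_false]
        exact Finset.prod_eq_zero (Finset.mem_univ j0) (by rw [if_pos rfl])
    rw [Finset.sum_congr rfl fun j0 _ => inner j0]
    rw [Finset.sum_ite_mem, Finset.univ_inter, Finset.sum_const, hEcard, smul_eq_mul]
    ring
  rw [Finset.sum_congr rfl step2, Finset.sum_const, Finset.card_powersetCard, Finset.card_univ,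
    Fintype.card_fin, smul_eq_mul]
  ring

end WFaux

namespace WFmodel
open WFaux

variable {n T : ℕ} (i : Fin n)

lemma descIndiv_congr (i : Fin n) (ω ω' : WFOmega n T) (u : ℕ)
    (h : ∀ (v : ℕ) (hv : v < T), v < u → ω ⟨v, hv⟩ = ω' ⟨v, hv⟩) :
    descIndiv n T i ω u = descIndiv n T i ω' u := by
  induction u with
  | zero => rfl
  | succ t ih =>
    have hprev : descIndiv n T i ω t = descIndiv n T i ω' t :=
      ih fun v hv hlt => h v hv (Nat.lt_succ_of_lt hlt)
    ext j
    simp only [descIndiv, Set.mem_setOf_eq]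
    constructor
    · rintro ⟨hT, c, hc⟩
      exact ⟨hT, c, by rw [← h t hT (Nat.lt_succ_self t), ← hprev]; exact hc⟩
    · rintro ⟨hT, c, hc⟩
      exact ⟨hT, c, by rw [h t hT (Nat.lt_succ_self t), hprev]; exact hc⟩

lemma ancAlleles_congr (i : Fin n) (ω ω' : WFOmega n T) (u : ℕ)
    (h : ∀ (v : ℕ) (hv : v < T), v < u → ω ⟨v, hv⟩ = ω' ⟨v, hv⟩) :
    ancAlleles n T i ω u = ancAlleles n T i ω' u := by
  induction u with
  | zero => rfl
  | succ t ih =>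
    have hprev : ancAlleles n T i ω t = ancAlleles n T i ω' t :=
      ih fun v hv hlt => h v hv (Nat.lt_succ_of_lt hlt)
    ext a
    simp only [ancAlleles, Set.mem_setOf_eq]
    constructor
    · rintro ⟨hT, hc⟩
      exact ⟨hT, by rw [← h t hT (Nat.lt_succ_self t), ← hprev]; exact hc⟩
    · rintro ⟨hT, hc⟩
      exact ⟨hT, by rw [h t hT (Nat.lt_succ_self t), hprev]; exact hc⟩

lemma ancAlleles_fst (i : Fin n) (ω : WFOmega n T) (u : ℕ) :
    ∀ a ∈ ancAlleles n T i ω u, a.1 ∈ descIndiv n T i ω u := by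
  induction u with
  | zero => intro a ha; exact ha
  | succ t ih =>
    rintro a ⟨hT, hmem⟩
    exact ⟨hT, a.2, ih _ hmem⟩

/-- Finset of generation-`u` descendants. -/
noncomputable def descFin (i : Fin n) (ω : WFOmega n T) (u : ℕ) : Finset (Fin n) :=
  (Set.toFinite (descIndiv n T i ω u)).toFinset

/-- Finset of generation-`u` descendant alleles. -/
noncomputable def ancFin (i : Fin n) (ω : WFOmega n T) (u : ℕ) : Finset (Fin n × Fin 2) :=
  (Set.toFinite (ancAlleles n T i ω u)).toFinset

lemma mem_descFin {i : Fin n} {ω : WFOmega n T} {u : ℕ} {j : Fin n} :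
    j ∈ descFin i ω u ↔ j ∈ descIndiv n T i ω u := Set.Finite.mem_toFinset _

lemma mem_ancFin {i : Fin n} {ω : WFOmega n T} {u : ℕ} {a : Fin n × Fin 2} :
    a ∈ ancFin i ω u ↔ a ∈ ancAlleles n T i ω u := Set.Finite.mem_toFinset _

lemma Gd_eq_card (i : Fin n) (ω : WFOmega n T) (u : ℕ) :
    Gd n T i ω u = (descFin i ω u).card :=
  Set.ncard_eq_toFinset_card _ _

lemma Qd_eq_card (i : Fin n) (ω : WFOmega n T) (u : ℕ) :
    Qd n T i ω u = (ancFin i ω u).card :=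
  Set.ncard_eq_toFinset_card _ _

lemma Gd_le (i : Fin n) (ω : WFOmega n T) (u : ℕ) : Gd n T i ω u ≤ n := by
  rw [Gd_eq_card]
  simpa using Finset.card_le_card (Finset.subset_univ (descFin i ω u))

lemma Gd_zero (i : Fin n) (ω : WFOmega n T) : Gd n T i ω 0 = 1 := by
  show (descIndiv n T i ω 0).ncard = 1
  simp [descIndiv, Set.ncard_singleton]

lemma Qd_zero (i : Fin n) (ω : WFOmega n T) : Qd n T i ω 0 = 2 := by
  show (ancAlleles n T i ω 0).ncard = 2
  have h : ancAlleles n T i ω 0 = (fun c : Fin 2 => ((i, c) : Fin n × Fin 2)) '' Set.univ := by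
    ext a
    simp only [ancAlleles, Set.mem_setOf_eq, Set.image_univ, Set.mem_range]
    constructor
    · intro h; exact ⟨a.2, by rw [← h]⟩
    · rintro ⟨c, rfl⟩; rfl
  rw [h, Set.ncard_image_of_injective _ (fun a b hab => by simpa using hab)]
  simp [Set.ncard_univ]

lemma Qd_eq_zero_of_Gd_eq_zero (i : Fin n) (ω : WFOmega n T) (u : ℕ) (h : Gd n T i ω u = 0) :
    Qd n T i ω u = 0 := by
  rw [Gd_eq_card] at h
  rw [Qd_eq_card]
  rw [Finset.card_eq_zero] at h ⊢
  rw [Finset.eq_empty_iff_forall_notMem] at h ⊢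
  intro a ha
  exact h a.1 (mem_descFin.mpr (ancAlleles_fst i ω u a (mem_ancFin.mp ha)))

section Split

variable {s : ℕ}

/-- splitting equiv at step `s` -/
noncomputable def spl (hs : s < T) :
    WFOmega n T ≃ (Fin n → Fin 2 → Fin n × Fin 2) × ({j : Fin T // j ≠ ⟨s, hs⟩} → Fin n → Fin 2 → Fin n × Fin 2) :=
  Equiv.piSplitAt (⟨s, hs⟩ : Fin T) _

lemma spl_symm_apply_same (hs : s < T) (σ ρ) : (spl (n := n) hs).symm (σ, ρ) ⟨s, hs⟩ = σ := by
  simp [spl, Equiv.piSplitAt_symm_apply]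

lemma spl_symm_apply_ne (hs : s < T) (σ ρ) (j : Fin T) (hj : j ≠ ⟨s, hs⟩) :
    (spl (n := n) hs).symm (σ, ρ) j = ρ ⟨j, hj⟩ := by
  simp [spl, Equiv.piSplitAt_symm_apply, hj]

lemma desc_spl_eq (hs : s < T) (σ σ' ρ) {u : ℕ} (hu : u ≤ s) :
    descIndiv n T i ((spl hs).symm (σ, ρ)) u = descIndiv n T i ((spl hs).symm (σ', ρ)) u := by
  refine descIndiv_congr i _ _ u fun v hv hlt => ?_
  have hne : (⟨v, hv⟩ : Fin T) ≠ ⟨s, hs⟩ := by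
    intro hcon
    have : v = s := by simpa using congrArg Fin.val hcon
    omega
  rw [spl_symm_apply_ne hs σ ρ _ hne, spl_symm_apply_ne hs σ' ρ _ hne]

lemma anc_spl_eq (hs : s < T) (σ σ' ρ) {u : ℕ} (hu : u ≤ s) :
    ancAlleles n T i ((spl hs).symm (σ, ρ)) u = ancAlleles n T i ((spl hs).symm (σ', ρ)) u := by
  refine ancAlleles_congr i _ _ u fun v hv hlt => ?_
  have hne : (⟨v, hv⟩ : Fin T) ≠ ⟨s, hs⟩ := by
    intro hcon
    have : v = s := by simpa using congrArg Fin.val hcon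
    omega
  rw [spl_symm_apply_ne hs σ ρ _ hne, spl_symm_apply_ne hs σ' ρ _ hne]

lemma Gd_succ_card (hs : s < T) (σ ρ) :
    Gd n T i ((spl hs).symm (σ, ρ)) (s+1)
      = (Finset.univ.filter fun j => ∃ c, (σ j c).1 ∈ descFin i ((spl hs).symm (σ, ρ)) s).card := by
  rw [Gd_eq_card]
  congr 1
  ext j
  rw [mem_descFin]
  simp only [descIndiv, Set.mem_setOf_eq, Finset.mem_filter, Finset.mem_univ, true_and]
  constructor
  · rintro ⟨h, c, hc⟩
    refine ⟨c, ?_⟩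
    rw [mem_descFin]
    rwa [spl_symm_apply_same] at hc
  · rintro ⟨c, hc⟩
    refine ⟨hs, c, ?_⟩
    rw [spl_symm_apply_same]
    exact mem_descFin.mp hc

lemma Qd_succ_card (hs : s < T) (σ ρ) :
    Qd n T i ((spl hs).symm (σ, ρ)) (s+1)
      = (Finset.univ.filter fun jc : Fin n × Fin 2 =>
          σ jc.1 jc.2 ∈ ancFin i ((spl hs).symm (σ, ρ)) s).card := by
  rw [Qd_eq_card]
  congr 1
  ext a
  rw [mem_ancFin]
  simp only [ancAlleles, Set.mem_setOf_eq, Finset.mem_filter, Finset.mem_univ, true_and]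
  constructor
  · rintro ⟨h, hc⟩
    rw [mem_ancFin]
    rwa [spl_symm_apply_same] at hc
  · intro hc
    refine ⟨hs, ?_⟩
    rw [spl_symm_apply_same]
    exact mem_ancFin.mp hc

lemma descFin_spl_eq (hs : s < T) (σ σ' ρ) {u : ℕ} (hu : u ≤ s) :
    descFin i ((spl hs).symm (σ, ρ)) u = descFin i ((spl hs).symm (σ', ρ)) u := by
  ext j; rw [mem_descFin, mem_descFin, desc_spl_eq i hs σ σ' ρ hu]

lemma ancFin_spl_eq (hs : s < T) (σ σ' ρ) {u : ℕ} (hu : u ≤ s) :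
    ancFin i ((spl hs).symm (σ, ρ)) u = ancFin i ((spl hs).symm (σ', ρ)) u := by
  ext a; rw [mem_ancFin, mem_ancFin, anc_spl_eq i hs σ σ' ρ hu]

lemma Gd_spl_eq (hs : s < T) (σ σ' ρ) {u : ℕ} (hu : u ≤ s) :
    Gd n T i ((spl hs).symm (σ, ρ)) u = Gd n T i ((spl hs).symm (σ', ρ)) u := by
  unfold Gd; rw [desc_spl_eq i hs σ σ' ρ hu]

lemma Qd_spl_eq (hs : s < T) (σ σ' ρ) {u : ℕ} (hu : u ≤ s) :
    Qd n T i ((spl hs).symm (σ, ρ)) u = Qd n T i ((spl hs).symm (σ', ρ)) u := by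
  unfold Qd; rw [anc_spl_eq i hs σ σ' ρ hu]

lemma cardStep : Fintype.card (Fin n → Fin 2 → Fin n × Fin 2) = (2*n)^(2*n) := by
  rw [Fintype.card_fun, Fintype.card_fun, Fintype.card_prod, Fintype.card_fin,
    Fintype.card_fin]
  rw [← pow_mul]
  ring

/-- transport of an `ω`-sum through the splitting equivalence -/
lemma sum_spl (hs : s < T) (F : WFOmega n T → ℕ) :
    ∑ ω : WFOmega n T, F ω
      = ∑ ρ : ({j : Fin T // j ≠ ⟨s, hs⟩} → Fin n → Fin 2 → Fin n × Fin 2),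
          ∑ σ : (Fin n → Fin 2 → Fin n × Fin 2), F ((spl hs).symm (σ, ρ)) := by
  rw [← Equiv.sum_comp (spl (n := n) hs).symm F, Fintype.sum_prod_type, Finset.sum_comm]

/-- R1: the one-step Markov recursion for the counts. -/
lemma R1 (hs : s < T) (g' : ℕ) :
    (2*n)^(2*n) * (∑ ω : WFOmega n T, if Gd n T i ω (s+1) = g' then (1:ℕ) else 0)
      = ∑ ω : WFOmega n T,
          n.choose g' * aN n (Gd n T i ω s) ^ g' * bN n (Gd n T i ω s) ^ (n - g') := by
  classical
  have hL := sum_spl hs (fun ω => if Gd n T i ω (s+1) = g' then (1:ℕ) else 0)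
  have hR := sum_spl hs (fun ω =>
    n.choose g' * aN n (Gd n T i ω s) ^ g' * bN n (Gd n T i ω s) ^ (n - g'))
  rw [hL, hR, Finset.mul_sum]
  refine Finset.sum_congr rfl fun ρ _ => ?_
  set D := descFin i ((spl hs).symm ((fun _ _ => (i, (0:Fin 2))), ρ)) s with hD
  have hinner : (∑ σ : (Fin n → Fin 2 → Fin n × Fin 2),
        if Gd n T i ((spl hs).symm (σ, ρ)) (s+1) = g' then (1:ℕ) else 0)
      = ∑ σ : (Fin n → Fin 2 → Fin n × Fin 2),
        (if (Finset.univ.filter fun j => ∃ c, (σ j c).1 ∈ D).card = g' then (1:ℕ) else 0) := by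
    refine Finset.sum_congr rfl fun σ _ => ?_
    rw [Gd_succ_card i hs σ ρ, descFin_spl_eq i hs σ (fun _ _ => (i, (0:Fin 2))) ρ le_rfl]
  rw [hinner, C1]
  have hG : ∀ σ : (Fin n → Fin 2 → Fin n × Fin 2),
      n.choose g' * aN n (Gd n T i ((spl hs).symm (σ, ρ)) s) ^ g'
          * bN n (Gd n T i ((spl hs).symm (σ, ρ)) s) ^ (n - g')
        = n.choose g' * aN n D.card ^ g' * bN n D.card ^ (n - g') := by
    intro σ
    rw [Gd_spl_eq i hs σ (fun _ _ => (i, (0:Fin 2))) ρ le_rfl, hD, ← Gd_eq_card]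
  rw [Finset.sum_congr rfl fun σ _ => hG σ, Finset.sum_const, Finset.card_univ,
    cardStep, smul_eq_mul]

/-- R2: the one-step Markov recursion for the allele-count sums. -/
lemma R2 (hs : s < T) (g' : ℕ) (hg' : 1 ≤ g') :
    (2*n)^(2*n) * (∑ ω : WFOmega n T, if Gd n T i ω (s+1) = g' then Qd n T i ω (s+1) else 0)
      = g' * ∑ ω : WFOmega n T,
          (n.choose g' * (4*n) * aN n (Gd n T i ω s) ^ (g'-1)
            * bN n (Gd n T i ω s) ^ (n - g')) * Qd n T i ω s := by
  classical
  have hL := sum_spl hs (fun ω => if Gd n T i ω (s+1) = g' then Qd n T i ω (s+1) else 0)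
  have hR := sum_spl hs (fun ω =>
    (n.choose g' * (4*n) * aN n (Gd n T i ω s) ^ (g'-1) * bN n (Gd n T i ω s) ^ (n - g'))
      * Qd n T i ω s)
  rw [hL, hR, Finset.mul_sum, Finset.mul_sum]
  refine Finset.sum_congr rfl fun ρ _ => ?_
  set D := descFin i ((spl hs).symm ((fun _ _ => (i, (0:Fin 2))), ρ)) s with hD
  set A := ancFin i ((spl hs).symm ((fun _ _ => (i, (0:Fin 2))), ρ)) s with hA
  have hAD : ∀ a ∈ A, a.1 ∈ D := by
    intro a ha
    rw [hD, mem_descFin]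
    exact ancAlleles_fst i _ s a (mem_ancFin.mp ha)
  have hinner : (∑ σ : (Fin n → Fin 2 → Fin n × Fin 2),
        if Gd n T i ((spl hs).symm (σ, ρ)) (s+1) = g'
          then Qd n T i ((spl hs).symm (σ, ρ)) (s+1) else 0)
      = ∑ σ : (Fin n → Fin 2 → Fin n × Fin 2),
        (if (Finset.univ.filter fun j => ∃ c, (σ j c).1 ∈ D).card = g'
          then (Finset.univ.filter fun jc : Fin n × Fin 2 => σ jc.1 jc.2 ∈ A).card else 0) := by
    refine Finset.sum_congr rfl fun σ _ => ?_
    rw [Gd_succ_card i hs σ ρ, Qd_succ_card i hs σ ρ, descFin_spl_eq i hs σ (fun _ _ => (i, (0:Fin 2))) ρ le_rfl,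
      ancFin_spl_eq i hs σ (fun _ _ => (i, (0:Fin 2))) ρ le_rfl]
  rw [hinner, C2 n D A hAD g' hg']
  have hG : ∀ σ : (Fin n → Fin 2 → Fin n × Fin 2),
      (n.choose g' * (4*n) * aN n (Gd n T i ((spl hs).symm (σ, ρ)) s) ^ (g'-1)
          * bN n (Gd n T i ((spl hs).symm (σ, ρ)) s) ^ (n - g'))
          * Qd n T i ((spl hs).symm (σ, ρ)) s
        = (n.choose g' * (4*n) * aN n D.card ^ (g'-1) * bN n D.card ^ (n - g')) * A.card := by
    intro σ
    rw [Gd_spl_eq i hs σ (fun _ _ => (i, (0:Fin 2))) ρ le_rfl, Qd_spl_eq i hs σ (fun _ _ => (i, (0:Fin 2))) ρ le_rfl, hD, hA,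
      ← Gd_eq_card, ← Qd_eq_card]
  rw [Finset.sum_congr rfl fun σ _ => hG σ, Finset.sum_const, Finset.card_univ,
    cardStep, smul_eq_mul]
  ring

end Split
end WFmodel

namespace WFreal

/-- real versions of the per-individual counts -/
noncomputable def aR (n g : ℕ) : ℝ := 4*(g:ℝ)*(2*(n:ℝ) - (g:ℝ))
noncomputable def bR (n g : ℕ) : ℝ := (2*(n:ℝ) - 2*(g:ℝ))^2
noncomputable def psi (n g : ℕ) : ℝ := (n:ℝ) / (2*(n:ℝ) - (g:ℝ))
noncomputable def kapR (n g g' : ℕ) : ℝ := (n.choose g' : ℝ) * aR n g ^ g' * bR n g ^ (n - g')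
noncomputable def kapR' (n g g' : ℕ) : ℝ :=
  (n.choose g' : ℝ) * (4*(n:ℝ)) * aR n g ^ (g'-1) * bR n g ^ (n - g')

lemma aR_cast {n g : ℕ} (h : g ≤ n) : ((4*g*(2*n - g) : ℕ) : ℝ) = aR n g := by
  have h2 : g ≤ 2*n := by omega
  unfold aR
  push_cast [Nat.cast_sub h2]
  ring

lemma bR_cast {n g : ℕ} (h : g ≤ n) : (((2*(n - g))^2 : ℕ) : ℝ) = bR n g := by
  unfold bR
  push_cast [Nat.cast_sub h]
  ring

lemma aR_nonneg {n g : ℕ} (h : g ≤ n) : 0 ≤ aR n g := by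
  have h1 : (g:ℝ) ≤ n := by exact_mod_cast h
  have h0 : (0:ℝ) ≤ g := by positivity
  unfold aR; nlinarith

lemma bR_nonneg (n g : ℕ) : 0 ≤ bR n g := sq_nonneg _

lemma kapR_nonneg {n g : ℕ} (h : g ≤ n) (g' : ℕ) : 0 ≤ kapR n g g' := by
  unfold kapR
  exact mul_nonneg (mul_nonneg (by positivity) (pow_nonneg (aR_nonneg h) _))
    (pow_nonneg (bR_nonneg n g) _)

lemma psi_pos {n g : ℕ} (hn : 1 ≤ n) (h : g ≤ n) : 0 < psi n g := by
  have h1 : (g:ℝ) ≤ n := by exact_mod_cast h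
  have h2 : (1:ℝ) ≤ n := by exact_mod_cast hn
  unfold psi
  apply div_pos <;> nlinarith

lemma psi_mono {n x y : ℕ} (hn : 1 ≤ n) (hxy : x ≤ y) (hy : y ≤ n) : psi n x ≤ psi n y := by
  have h1 : (x:ℝ) ≤ y := by exact_mod_cast hxy
  have h2 : (y:ℝ) ≤ n := by exact_mod_cast hy
  have h3 : (1:ℝ) ≤ n := by exact_mod_cast hn
  unfold psi
  apply div_le_div_of_nonneg_left (by positivity) (by nlinarith) (by nlinarith)

lemma psi_strictMono {n x y : ℕ} (hn : 1 ≤ n) (hxy : x < y) (hy : y ≤ n) : psi n x < psi n y := by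
  have h1 : (x:ℝ) < y := by exact_mod_cast hxy
  have h2 : (y:ℝ) ≤ n := by exact_mod_cast hy
  have h3 : (1:ℝ) ≤ n := by exact_mod_cast hn
  unfold psi
  apply div_lt_div_of_pos_left (by nlinarith) (by nlinarith) (by nlinarith)

/-- the key algebraic identity relating the two kernels -/
lemma kapR'_mul_eq {n g g' : ℕ} (hn : 1 ≤ n) (hg : g ≤ n) (hg' : 1 ≤ g') :
    kapR' n g g' * (g:ℝ) = kapR n g g' * psi n g := by
  have h1 : (g:ℝ) ≤ n := by exact_mod_cast hg
  have h3 : (1:ℝ) ≤ n := by exact_mod_cast hn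
  have hden : 2*(n:ℝ) - g ≠ 0 := by nlinarith
  have hpow : aR n g ^ g' = aR n g ^ (g'-1) * aR n g := by
    conv_lhs => rw [show g' = (g'-1) + 1 by omega]
    rw [pow_succ]
  unfold kapR kapR' psi aR at *
  rw [hpow]
  have hden' : -(g:ℝ) + n*2 ≠ 0 := by nlinarith
  field_simp
  have hinv : ((-(g:ℝ) + n*2)⁻¹) * (-(g:ℝ) + n*2) = 1 := inv_mul_cancel₀ hden'
  linear_combination (-((n.choose g' : ℝ) * g * bR n g ^ (n - g') * ((g:ℝ) * n * 8 - (g:ℝ) ^ 2 * 4) ^ (g' - 1))) * hinv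

/-- TP2 property of the binomial kernel -/
lemma kapR_TP2 {n x y g g' : ℕ} (hxy : x ≤ y) (hy : y ≤ n) (hgg : g ≤ g') (hg' : g' ≤ n) :
    kapR n x g' * kapR n y g ≤ kapR n x g * kapR n y g' := by
  have hx : x ≤ n := le_trans hxy hy
  have hax := aR_nonneg hx
  have hay := aR_nonneg hy
  have hbx := bR_nonneg n x
  have hby := bR_nonneg n y
  -- monotonicity facts
  have h1 : (x:ℝ) ≤ y := by exact_mod_cast hxy
  have h2 : (y:ℝ) ≤ n := by exact_mod_cast hy
  have h0 : (0:ℝ) ≤ x := by positivity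
  have hamono : aR n x ≤ aR n y := by unfold aR; nlinarith
  have hbmono : bR n y ≤ bR n x := by
    unfold bR
    nlinarith [sq_nonneg (2*(n:ℝ) - 2*x), sq_nonneg (2*(n:ℝ) - 2*y)]
  have hcross : aR n x * bR n y ≤ aR n y * bR n x := by
    calc aR n x * bR n y ≤ aR n y * bR n y := by nlinarith
    _ ≤ aR n y * bR n x := by nlinarith
  -- factorization
  obtain ⟨d, rfl⟩ : ∃ d, g' = g + d := ⟨g' - g, by omega⟩
  have hnd : n - g = (n - (g+d)) + d := by omega
  have key : ∀ u v : ℕ,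
      kapR n u (g+d) * kapR n v g
        = ((n.choose (g+d) : ℝ) * (n.choose g : ℝ))
          * (aR n u ^ g * aR n v ^ g * bR n u ^ (n - (g+d)) * bR n v ^ (n - (g+d)))
          * (aR n u * bR n v) ^ d := by
    intro u v
    unfold kapR
    rw [hnd, pow_add, pow_add, mul_pow]
    ring
  have hswap : kapR n x g * kapR n y (g+d)
      = ((n.choose (g+d) : ℝ) * (n.choose g : ℝ))
        * (aR n x ^ g * aR n y ^ g * bR n x ^ (n - (g+d)) * bR n y ^ (n - (g+d)))
        * (aR n y * bR n x) ^ d := by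
    rw [mul_comm, key y x]; ring
  rw [key x y, hswap]
  have hM : 0 ≤ ((n.choose (g+d) : ℝ) * (n.choose g : ℝ))
      * (aR n x ^ g * aR n y ^ g * bR n x ^ (n - (g+d)) * bR n y ^ (n - (g+d))) := by
    apply mul_nonneg (by positivity)
    exact mul_nonneg (mul_nonneg (mul_nonneg (pow_nonneg hax g) (pow_nonneg hay g))
      (pow_nonneg hbx _)) (pow_nonneg hby _)
  exact mul_le_mul_of_nonneg_left (pow_le_pow_left₀ (mul_nonneg hax hby) hcross d) hM

/-- strict TP2 at sources 1 < 2 -/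
lemma kapR_TP2_strict {n k k' : ℕ} (hn : 2 ≤ n) (hk : 1 ≤ k) (hkk : k < k') (hk' : k' ≤ n) :
    kapR n 1 k' * kapR n 2 k < kapR n 1 k * kapR n 2 k' := by
  have h2 : (2:ℝ) ≤ n := by exact_mod_cast hn
  have hk'n := hk'
  obtain ⟨d, rfl⟩ : ∃ d, k' = k + d := ⟨k' - k, by omega⟩
  have hnd : n - k = (n - (k+d)) + d := by omega
  have key : ∀ u v : ℕ,
      kapR n u (k+d) * kapR n v k
        = ((n.choose (k+d) : ℝ) * (n.choose k : ℝ))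
          * (aR n u ^ k * aR n v ^ k * bR n u ^ (n - (k+d)) * bR n v ^ (n - (k+d)))
          * (aR n u * bR n v) ^ d := by
    intro u v
    unfold kapR
    rw [hnd, pow_add, pow_add, mul_pow]
    ring
  have hswap : kapR n 1 k * kapR n 2 (k+d)
      = ((n.choose (k+d) : ℝ) * (n.choose k : ℝ))
        * (aR n 1 ^ k * aR n 2 ^ k * bR n 1 ^ (n - (k+d)) * bR n 2 ^ (n - (k+d)))
        * (aR n 2 * bR n 1) ^ d := by
    rw [mul_comm, key 2 1]; ring
  rw [key 1 2, hswap]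
  -- positivity of the common factor
  have ha1 : 0 < aR n 1 := by unfold aR; push_cast; nlinarith
  have ha2 : 0 < aR n 2 := by unfold aR; push_cast; nlinarith
  have hb1 : 0 < bR n 1 := by
    unfold bR; push_cast
    nlinarith
  have hb2pow : 0 < bR n 2 ^ (n - (k+d)) := by
    rcases Nat.eq_or_lt_of_le hk' with heq | hlt
    · rw [heq]; simp
    · have hn3 : 3 ≤ n := by omega
      have h3 : (3:ℝ) ≤ n := by exact_mod_cast hn3
      have hb2 : 0 < bR n 2 := by unfold bR; push_cast; nlinarith
      positivity
  have hc1 : 0 < (n.choose k : ℝ) := by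
    exact_mod_cast Nat.choose_pos (le_trans (le_of_lt hkk) hk')
  have hc2 : 0 < (n.choose (k+d) : ℝ) := by exact_mod_cast Nat.choose_pos hk'
  have hM : 0 < ((n.choose (k+d) : ℝ) * (n.choose k : ℝ))
      * (aR n 1 ^ k * aR n 2 ^ k * bR n 1 ^ (n - (k+d)) * bR n 2 ^ (n - (k+d))) := by
    apply mul_pos (by positivity)
    exact mul_pos (mul_pos (mul_pos (pow_pos ha1 k) (pow_pos ha2 k))
      (pow_pos hb1 _)) hb2pow
  apply mul_lt_mul_of_pos_left _ hM
  have hdpos : d ≠ 0 := by omega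
  apply pow_lt_pow_left₀ _ (mul_nonneg ha1.le (bR_nonneg n 2)) hdpos
  -- a1 * b2 < a2 * b1
  unfold aR bR
  push_cast
  nlinarith [mul_pos (by nlinarith : (0:ℝ) < (n:ℝ)^2) (by nlinarith : (0:ℝ) < 2*(n:ℝ) - 3)]

section Cross

variable {n : ℕ} {m β : ℕ → ℝ}

lemma pair_nonpos
    (hinv : ∀ x y, x ≤ y → y ≤ n → m x * β y ≤ m y * β x)
    {g g' : ℕ} (hgg : g ≤ g') (hg' : g' ≤ n)
    {x y : ℕ} (hx : x ≤ n) (hy : y ≤ n) :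
    (kapR n x g * m x) * (kapR n y g' * β y) - (kapR n x g' * m x) * (kapR n y g * β y)
      + ((kapR n y g * m y) * (kapR n x g' * β x) - (kapR n y g' * m y) * (kapR n x g * β x))
    ≤ 0 := by
  rcases le_total x y with h | h
  · have h1 : m x * β y ≤ m y * β x := hinv x y h hy
    have h2 : kapR n x g' * kapR n y g ≤ kapR n x g * kapR n y g' := kapR_TP2 h hy hgg hg'
    have hprod := mul_nonneg (sub_nonneg.mpr h1) (sub_nonneg.mpr h2)
    nlinarith [hprod]
  · have h1 : m y * β x ≤ m x * β y := hinv y x h hx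
    have h2 : kapR n y g' * kapR n x g ≤ kapR n y g * kapR n x g' := kapR_TP2 h hx hgg hg'
    have hprod := mul_nonneg (sub_nonneg.mpr h1) (sub_nonneg.mpr h2)
    nlinarith [hprod]

/-- the nonstrict TP2 composition inequality -/
lemma cross_le
    (hinv : ∀ x y, x ≤ y → y ≤ n → m x * β y ≤ m y * β x)
    {g g' : ℕ} (hgg : g ≤ g') (hg' : g' ≤ n) :
    (∑ x ∈ range (n+1), kapR n x g * m x) * (∑ y ∈ range (n+1), kapR n y g' * β y)
      ≤ (∑ x ∈ range (n+1), kapR n x g' * m x) * (∑ y ∈ range (n+1), kapR n y g * β y) := by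
  rw [Finset.sum_mul_sum, Finset.sum_mul_sum, ← sub_nonpos]
  simp only [← Finset.sum_sub_distrib]
  set F : ℕ → ℕ → ℝ := fun x y =>
    (kapR n x g * m x) * (kapR n y g' * β y) - (kapR n x g' * m x) * (kapR n y g * β y)
    with hF
  show ∑ x ∈ range (n+1), ∑ y ∈ range (n+1), F x y ≤ 0
  have hswap : ∑ x ∈ range (n+1), ∑ y ∈ range (n+1), F x y
      = ∑ x ∈ range (n+1), ∑ y ∈ range (n+1), F y x := Finset.sum_comm
  have h2 : 2 * (∑ x ∈ range (n+1), ∑ y ∈ range (n+1), F x y)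
      = ∑ x ∈ range (n+1), ∑ y ∈ range (n+1), (F x y + F y x) := by
    rw [two_mul]
    nth_rewrite 2 [hswap]
    simp only [← Finset.sum_add_distrib]
  have h3 : ∑ x ∈ range (n+1), ∑ y ∈ range (n+1), (F x y + F y x) ≤ 0 := by
    refine Finset.sum_nonpos fun x hx => Finset.sum_nonpos fun y hy => ?_
    exact pair_nonpos hinv hgg hg' (Nat.lt_succ_iff.mp (Finset.mem_range.mp hx))
      (Nat.lt_succ_iff.mp (Finset.mem_range.mp hy))
  linarith

/-- the strict TP2 composition inequality -/
lemma cross_lt (hn : 2 ≤ n)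
    (hinv : ∀ x y, x ≤ y → y ≤ n → m x * β y ≤ m y * β x)
    (h12 : m 1 * β 2 < m 2 * β 1)
    {g g' : ℕ} (hgg : g ≤ g') (hg' : g' ≤ n)
    (hstp : kapR n 1 g' * kapR n 2 g < kapR n 1 g * kapR n 2 g') :
    (∑ x ∈ range (n+1), kapR n x g * m x) * (∑ y ∈ range (n+1), kapR n y g' * β y)
      < (∑ x ∈ range (n+1), kapR n x g' * m x) * (∑ y ∈ range (n+1), kapR n y g * β y) := by
  rw [Finset.sum_mul_sum, Finset.sum_mul_sum, ← sub_neg]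
  simp only [← Finset.sum_sub_distrib]
  set F : ℕ → ℕ → ℝ := fun x y =>
    (kapR n x g * m x) * (kapR n y g' * β y) - (kapR n x g' * m x) * (kapR n y g * β y)
    with hF
  show ∑ x ∈ range (n+1), ∑ y ∈ range (n+1), F x y < 0
  have hswap : ∑ x ∈ range (n+1), ∑ y ∈ range (n+1), F x y
      = ∑ x ∈ range (n+1), ∑ y ∈ range (n+1), F y x := Finset.sum_comm
  have h2 : 2 * (∑ x ∈ range (n+1), ∑ y ∈ range (n+1), F x y)
      = ∑ x ∈ range (n+1), ∑ y ∈ range (n+1), (F x y + F y x) := by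
    rw [two_mul]
    nth_rewrite 2 [hswap]
    simp only [← Finset.sum_add_distrib]
  have h3 : ∑ x ∈ range (n+1), ∑ y ∈ range (n+1), (F x y + F y x) < 0 := by
    have hzero : (0:ℝ) = ∑ _x ∈ range (n+1), (0:ℝ) := by simp
    rw [hzero]
    refine Finset.sum_lt_sum (fun x hx => Finset.sum_nonpos fun y hy =>
      pair_nonpos hinv hgg hg' (Nat.lt_succ_iff.mp (Finset.mem_range.mp hx))
        (Nat.lt_succ_iff.mp (Finset.mem_range.mp hy))) ?_
    refine ⟨1, Finset.mem_range.mpr (by omega), ?_⟩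
    have hzero2 : (0:ℝ) = ∑ _y ∈ range (n+1), (0:ℝ) := by simp
    rw [hzero2]
    refine Finset.sum_lt_sum (fun y hy =>
      pair_nonpos hinv hgg hg' (by omega)
        (Nat.lt_succ_iff.mp (Finset.mem_range.mp hy))) ?_
    refine ⟨2, Finset.mem_range.mpr (by omega), ?_⟩
    have heq : F 1 2 + F 2 1
        = (m 1 * β 2 - m 2 * β 1) * (kapR n 1 g * kapR n 2 g' - kapR n 1 g' * kapR n 2 g) := by
      rw [hF]; ring
    rw [heq]
    exact mul_neg_of_neg_of_pos (by linarith) (by linarith)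
  linarith

end Cross
end WFreal

-- ===== final development =====
namespace WFfinal
open WFaux WFreal WFmodel

variable {n T : ℕ} (i : Fin n)

/-- normalizing constant -/
noncomputable def cR (n : ℕ) : ℝ := (((2*n)^(2*n) : ℕ) : ℝ)

lemma cR_pos {n : ℕ} (hn : 1 ≤ n) : 0 < cR n := by
  unfold cR
  have : 0 < (2*n)^(2*n) := Nat.pow_pos (by omega)
  exact_mod_cast this

noncomputable def Bs (i : Fin n) (s g : ℕ) : ℝ :=
  ((Finset.univ.filter fun ω : WFOmega n T => Gd n T i ω s = g).card : ℝ)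

noncomputable def Gs (i : Fin n) (s g : ℕ) : ℝ :=
  ∑ ω ∈ Finset.univ.filter (fun ω : WFOmega n T => Gd n T i ω s = g), (Qd n T i ω s : ℝ)

noncomputable def Hf (n : ℕ) (c0 : ℝ) : ℕ → ℕ → ℝ
  | 0, g => if g = 1 then 2*c0 else 0
  | (s+1), g' => (cR n)⁻¹ * ∑ g ∈ range (n+1), kapR n g g' * (psi n g * Hf n c0 s g)

lemma Bs_nonneg (s g : ℕ) : 0 ≤ Bs (T := T) i s g := by unfold Bs; positivity

lemma aN_cast {g : ℕ} (h : g ≤ n) : ((aN n g : ℕ) : ℝ) = aR n g := aR_cast h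
lemma bN_cast {g : ℕ} (h : g ≤ n) : ((bN n g : ℕ) : ℝ) = bR n g := bR_cast h

lemma kapN_cast {g g' : ℕ} (h : g ≤ n) :
    ((n.choose g' * aN n g ^ g' * bN n g ^ (n - g') : ℕ) : ℝ) = kapR n g g' := by
  push_cast
  rw [aN_cast h, bN_cast h]
  rfl

lemma kapN'_cast {g g' : ℕ} (h : g ≤ n) :
    ((n.choose g' * (4*n) * aN n g ^ (g'-1) * bN n g ^ (n - g') : ℕ) : ℝ) = kapR' n g g' := by
  push_cast
  rw [aN_cast h, bN_cast h]
  unfold kapR'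
  push_cast
  ring

/-- `Bs` as a sum of indicators over the whole space -/
lemma Bs_eq_sum (s g : ℕ) :
    Bs (T := T) i s g = ∑ ω : WFOmega n T, if Gd n T i ω s = g then (1:ℝ) else 0 := by
  unfold Bs
  rw [Finset.card_filter]
  push_cast
  rfl

lemma Gs_eq_sum (s g : ℕ) :
    Gs (T := T) i s g = ∑ ω : WFOmega n T, if Gd n T i ω s = g then (Qd n T i ω s : ℝ) else 0 := by
  unfold Gs
  rw [Finset.sum_filter]

/-- the real-valued count recursion -/
lemma cR_eq : cR n = (2*(n:ℝ))^(2*n) := by unfold cR; push_cast; rfl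

lemma Bs_rec {s : ℕ} (hs : s < T) (g' : ℕ) :
    cR n * Bs (T := T) i (s+1) g'
      = ∑ g ∈ range (n+1), kapR n g g' * Bs (T := T) i s g := by
  have h2 := congrArg (fun x : ℕ => (x : ℝ)) (R1 i hs g')
  push_cast at h2
  rw [cR_eq, Bs_eq_sum, h2]
  have hRw : ∀ ω : WFOmega n T,
      ((n.choose g' : ℝ) * (aN n (Gd n T i ω s) : ℝ) ^ g'
          * (bN n (Gd n T i ω s) : ℝ) ^ (n - g'))
        = kapR n (Gd n T i ω s) g' := by
    intro ω
    rw [aN_cast (Gd_le i ω s), bN_cast (Gd_le i ω s)]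
    rfl
  rw [Finset.sum_congr rfl fun ω _ => hRw ω]
  rw [← Finset.sum_fiberwise_of_maps_to
    (fun ω _ => Finset.mem_range.mpr (Nat.lt_succ_of_le (Gd_le i ω s)))
    (fun ω : WFOmega n T => kapR n (Gd n T i ω s) g')]
  refine Finset.sum_congr rfl fun g hg => ?_
  have hfib : ∀ ω ∈ Finset.univ.filter (fun ω : WFOmega n T => Gd n T i ω s = g),
      kapR n (Gd n T i ω s) g' = kapR n g g' := by
    intro ω hω
    rw [(Finset.mem_filter.mp hω).2]
  rw [Finset.sum_congr rfl hfib, Finset.sum_const, nsmul_eq_mul]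
  unfold Bs
  ring

/-- the real-valued allele-sum recursion -/
lemma Gs_rec {s : ℕ} (hs : s < T) {g' : ℕ} (hg' : 1 ≤ g') :
    cR n * Gs (T := T) i (s+1) g'
      = (g' : ℝ) * ∑ g ∈ range (n+1), kapR' n g g' * Gs (T := T) i s g := by
  have h2 := congrArg (fun x : ℕ => (x : ℝ)) (R2 i hs g' hg')
  push_cast at h2
  rw [cR_eq, Gs_eq_sum, h2]
  congr 1
  have hRw : ∀ ω : WFOmega n T,
      ((n.choose g' : ℝ) * (4*(n:ℝ)) * (aN n (Gd n T i ω s) : ℝ) ^ (g'-1)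
          * (bN n (Gd n T i ω s) : ℝ) ^ (n - g') * (Qd n T i ω s : ℝ))
        = kapR' n (Gd n T i ω s) g' * (Qd n T i ω s : ℝ) := by
    intro ω
    rw [aN_cast (Gd_le i ω s), bN_cast (Gd_le i ω s)]
    rfl
  rw [Finset.sum_congr rfl fun ω _ => hRw ω]
  rw [← Finset.sum_fiberwise_of_maps_to
    (fun ω _ => Finset.mem_range.mpr (Nat.lt_succ_of_le (Gd_le i ω s)))
    (fun ω : WFOmega n T => kapR' n (Gd n T i ω s) g' * (Qd n T i ω s : ℝ))]
  refine Finset.sum_congr rfl fun g hg => ?_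
  have hfib : ∀ ω ∈ Finset.univ.filter (fun ω : WFOmega n T => Gd n T i ω s = g),
      kapR' n (Gd n T i ω s) g' * (Qd n T i ω s : ℝ)
        = kapR' n g g' * (Qd n T i ω s : ℝ) := by
    intro ω hω
    rw [(Finset.mem_filter.mp hω).2]
  rw [Finset.sum_congr rfl hfib, ← Finset.mul_sum]
  rfl

noncomputable def c0 (n T : ℕ) : ℝ := (Fintype.card (WFOmega n T) : ℝ)

lemma c0_pos (i : Fin n) : 0 < c0 n T := by
  have : Nonempty (WFOmega n T) := ⟨fun _ _ _ => (i, 0)⟩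
  unfold c0
  exact_mod_cast Fintype.card_pos

lemma Bs_zero_ne (g : ℕ) (hg : g ≠ 1) : Bs (T := T) i 0 g = 0 := by
  unfold Bs
  rw [Finset.filter_false_of_mem, Finset.card_empty]
  · norm_num
  · intro ω _
    rw [Gd_zero]
    omega

lemma Bs_zero_one : Bs (T := T) i 0 1 = c0 n T := by
  unfold Bs c0
  rw [Finset.filter_true_of_mem fun ω _ => Gd_zero i ω, Finset.card_univ]

lemma Gs_zero (g : ℕ) : Gs (T := T) i 0 g = if g = 1 then 2 * c0 n T else 0 := by
  by_cases hg : g = 1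
  · subst hg
    rw [if_pos rfl]
    unfold Gs c0
    rw [Finset.filter_true_of_mem fun ω _ => Gd_zero i ω]
    have : ∀ ω ∈ (Finset.univ : Finset (WFOmega n T)), ((Qd n T i ω 0 : ℕ) : ℝ) = 2 := by
      intro ω _
      rw [Qd_zero]
      norm_num
    rw [Finset.sum_congr rfl this, Finset.sum_const, nsmul_eq_mul, Finset.card_univ]
    ring
  · rw [if_neg hg]
    unfold Gs
    rw [Finset.filter_false_of_mem, Finset.sum_empty]
    intro ω _
    rw [Gd_zero]
    omega

/-- representation `Gs = g' * Hf` -/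
lemma Gs_eq_Hf (hn : 1 ≤ n) : ∀ s, s ≤ T → ∀ g',
    Gs (T := T) i s g' = (g' : ℝ) * Hf n (c0 n T) s g' := by
  intro s
  induction s with
  | zero =>
    intro _ g'
    rw [Gs_zero]
    show _ = (g' : ℝ) * (if g' = 1 then 2 * c0 n T else 0)
    by_cases hg : g' = 1
    · subst hg; simp
    · simp [hg]
  | succ s ih =>
    intro hsT g'
    have hs : s < T := hsT
    by_cases hg0 : g' = 0
    · subst hg0
      have hzero : Gs (T := T) i (s+1) 0 = 0 := by
        unfold Gs
        refine Finset.sum_eq_zero fun ω hω => ?_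
        rw [Qd_eq_zero_of_Gd_eq_zero i ω (s+1) (Finset.mem_filter.mp hω).2]
        norm_num
      rw [hzero]
      norm_num
    · have hg' : 1 ≤ g' := Nat.one_le_iff_ne_zero.mpr hg0
      have hrec := Gs_rec i hs hg'
      have hihs : ∀ g ∈ range (n+1),
          kapR' n g g' * Gs (T := T) i s g
            = kapR n g g' * (psi n g * Hf n (c0 n T) s g) := by
        intro g hg
        rw [ih (Nat.le_of_succ_le hsT) g]
        have hgle : g ≤ n := Nat.lt_succ_iff.mp (Finset.mem_range.mp hg)
        have hkey := kapR'_mul_eq (g' := g') hn hgle hg'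
        calc kapR' n g g' * ((g:ℝ) * Hf n (c0 n T) s g)
            = (kapR' n g g' * (g:ℝ)) * Hf n (c0 n T) s g := by ring
          _ = (kapR n g g' * psi n g) * Hf n (c0 n T) s g := by rw [hkey]
          _ = kapR n g g' * (psi n g * Hf n (c0 n T) s g) := by ring
      rw [Finset.sum_congr rfl hihs] at hrec
      have hcne : cR n ≠ 0 := ne_of_gt (cR_pos hn)
      have hHf : Hf n (c0 n T) (s+1) g'
          = (cR n)⁻¹ * ∑ g ∈ range (n+1), kapR n g g' * (psi n g * Hf n (c0 n T) s g) := rfl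
      have hfinal : cR n * Gs (T := T) i (s+1) g'
          = cR n * ((g' : ℝ) * Hf n (c0 n T) (s+1) g') := by
        rw [hrec, hHf]
        field_simp
      exact mul_left_cancel₀ hcne hfinal

lemma Hf_nonneg (hn : 1 ≤ n) {cv : ℝ} (hc : 0 ≤ cv) : ∀ s g, 0 ≤ Hf n cv s g := by
  intro s
  induction s with
  | zero =>
    intro g
    show (0:ℝ) ≤ if g = 1 then 2*cv else 0
    split <;> linarith
  | succ s ih =>
    intro g'
    show (0:ℝ) ≤ (cR n)⁻¹ * ∑ g ∈ range (n+1), kapR n g g' * (psi n g * Hf n cv s g)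
    have hc0 : (0:ℝ) ≤ (cR n)⁻¹ := inv_nonneg.mpr (cR_pos hn).le
    refine mul_nonneg hc0 (Finset.sum_nonneg fun g hg => ?_)
    have hgle : g ≤ n := Nat.lt_succ_iff.mp (Finset.mem_range.mp hg)
    exact mul_nonneg (kapR_nonneg hgle g')
      (mul_nonneg (psi_pos hn hgle).le (ih g))

lemma kapR_one_pos (hn2 : 2 ≤ n) {g' : ℕ} (hg' : g' ≤ n) : 0 < kapR n 1 g' := by
  have h2 : (2:ℝ) ≤ n := by exact_mod_cast hn2
  unfold kapR
  have hc : 0 < (n.choose g' : ℝ) := by exact_mod_cast Nat.choose_pos hg'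
  have ha : 0 < aR n 1 := by unfold aR; push_cast; nlinarith
  have hb : 0 < bR n 1 := by unfold bR; push_cast; nlinarith
  positivity

lemma Hf_one_pos (hn2 : 2 ≤ n) {cv : ℝ} (hc : 0 < cv) : ∀ s, 0 < Hf n cv s 1 := by
  have hn : 1 ≤ n := by omega
  intro s
  induction s with
  | zero =>
    show (0:ℝ) < if 1 = 1 then 2*cv else 0
    rw [if_pos rfl]; linarith
  | succ s ih =>
    show (0:ℝ) < (cR n)⁻¹ * ∑ g ∈ range (n+1), kapR n g 1 * (psi n g * Hf n cv s g)
    have hterm : 0 < kapR n 1 1 * (psi n 1 * Hf n cv s 1) :=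
      mul_pos (kapR_one_pos hn2 hn) (mul_pos (psi_pos hn hn) ih)
    have hle : kapR n 1 1 * (psi n 1 * Hf n cv s 1)
        ≤ ∑ g ∈ range (n+1), kapR n g 1 * (psi n g * Hf n cv s g) := by
      refine Finset.single_le_sum (f := fun g => kapR n g 1 * (psi n g * Hf n cv s g))
        (fun g hg => ?_) (Finset.mem_range.mpr (by omega))
      have hgle : g ≤ n := Nat.lt_succ_iff.mp (Finset.mem_range.mp hg)
      exact mul_nonneg (kapR_nonneg hgle 1)
        (mul_nonneg (psi_pos hn hgle).le (Hf_nonneg hn hc.le s g))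
    exact mul_pos (inv_pos.mpr (cR_pos hn)) (lt_of_lt_of_le hterm hle)

lemma Bs_one_pos (hn2 : 2 ≤ n) : ∀ s, s ≤ T → 0 < Bs (T := T) i s 1 := by
  have hn : 1 ≤ n := by omega
  intro s
  induction s with
  | zero =>
    intro _
    rw [Bs_zero_one]
    exact c0_pos i
  | succ s ih =>
    intro hsT
    have hs : s < T := hsT
    have hrec := Bs_rec i hs 1
    have hterm : 0 < kapR n 1 1 * Bs (T := T) i s 1 :=
      mul_pos (kapR_one_pos hn2 hn) (ih (le_of_lt hs))
    have hle : kapR n 1 1 * Bs (T := T) i s 1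
        ≤ ∑ g ∈ range (n+1), kapR n g 1 * Bs (T := T) i s g := by
      refine Finset.single_le_sum (f := fun g => kapR n g 1 * Bs (T := T) i s g)
        (fun g hg => ?_) (Finset.mem_range.mpr (by omega))
      have hgle : g ≤ n := Nat.lt_succ_iff.mp (Finset.mem_range.mp hg)
      exact mul_nonneg (kapR_nonneg hgle 1) (Bs_nonneg i s g)
    have hpos : 0 < cR n * Bs (T := T) i (s+1) 1 := by
      rw [hrec]; exact lt_of_lt_of_le hterm hle
    have hcne : cR n ≠ 0 := ne_of_gt (cR_pos hn)
    have heq : Bs (T := T) i (s+1) 1 = (cR n)⁻¹ * (cR n * Bs (T := T) i (s+1) 1) :=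
      (inv_mul_cancel_left₀ hcne _).symm
    rw [heq]
    exact mul_pos (inv_pos.mpr (cR_pos hn)) hpos

lemma Bs_pos (hn2 : 2 ≤ n) {s : ℕ} (hs1 : 1 ≤ s) (hsT : s ≤ T) {g : ℕ} (hg : g ≤ n) :
    0 < Bs (T := T) i s g := by
  have hn : 1 ≤ n := by omega
  obtain ⟨u, rfl⟩ : ∃ u, s = u + 1 := ⟨s - 1, by omega⟩
  have hu : u < T := hsT
  have hrec := Bs_rec i hu g
  have hterm : 0 < kapR n 1 g * Bs (T := T) i u 1 :=
    mul_pos (kapR_one_pos hn2 hg) (Bs_one_pos i hn2 u (le_of_lt hu))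
  have hle : kapR n 1 g * Bs (T := T) i u 1
      ≤ ∑ x ∈ range (n+1), kapR n x g * Bs (T := T) i u x := by
    refine Finset.single_le_sum (f := fun x => kapR n x g * Bs (T := T) i u x)
      (fun x hx => ?_) (Finset.mem_range.mpr (by omega))
    have hgle : x ≤ n := Nat.lt_succ_iff.mp (Finset.mem_range.mp hx)
    exact mul_nonneg (kapR_nonneg hgle g) (Bs_nonneg i u x)
  have hpos : 0 < cR n * Bs (T := T) i (u+1) g := by
    rw [hrec]; exact lt_of_lt_of_le hterm hle
  have hcne : cR n ≠ 0 := ne_of_gt (cR_pos hn)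
  have heq : Bs (T := T) i (u+1) g = (cR n)⁻¹ * (cR n * Bs (T := T) i (u+1) g) :=
    (inv_mul_cancel_left₀ hcne _).symm
  rw [heq]
  exact mul_pos (inv_pos.mpr (cR_pos hn)) hpos

/-- the likelihood-ratio invariant -/
lemma LR (hn2 : 2 ≤ n) : ∀ s, s ≤ T → ∀ x y, x ≤ y → y ≤ n →
    Hf n (c0 n T) s x * Bs (T := T) i s y ≤ Hf n (c0 n T) s y * Bs (T := T) i s x := by
  have hn : 1 ≤ n := by omega
  have hcpos := c0_pos (T := T) i
  intro s
  induction s with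
  | zero =>
    intro _ x y hxy hy
    rcases eq_or_lt_of_le hxy with rfl | hlt
    · exact le_rfl
    · have hLHS : Hf n (c0 n T) 0 x * Bs (T := T) i 0 y = 0 := by
        by_cases hx1 : x = 1
        · rw [Bs_zero_ne i y (by omega), mul_zero]
        · have : Hf n (c0 n T) 0 x = 0 := if_neg hx1
          rw [this, zero_mul]
      rw [hLHS]
      exact mul_nonneg (Hf_nonneg hn hcpos.le 0 y) (Bs_nonneg i 0 x)
  | succ s ih =>
    intro hsT x y hxy hy
    have hs : s < T := hsT
    have hcne : cR n ≠ 0 := ne_of_gt (cR_pos hn)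
    have hH : ∀ γ, cR n * Hf n (c0 n T) (s+1) γ
        = ∑ g ∈ range (n+1), kapR n g γ * (psi n g * Hf n (c0 n T) s g) := by
      intro γ
      show cR n * ((cR n)⁻¹ * _) = _
      field_simp
    have hB := fun γ => Bs_rec i hs γ
    -- the invariant hypothesis for cross_le
    have hinv : ∀ a b, a ≤ b → b ≤ n →
        (psi n a * Hf n (c0 n T) s a) * Bs (T := T) i s b
          ≤ (psi n b * Hf n (c0 n T) s b) * Bs (T := T) i s a := by
      intro a b hab hbn
      have h1 := ih (Nat.le_of_succ_le hsT) a b hab hbn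
      have hpa := (psi_pos hn (le_trans hab hbn)).le
      calc (psi n a * Hf n (c0 n T) s a) * Bs (T := T) i s b
          = psi n a * (Hf n (c0 n T) s a * Bs (T := T) i s b) := by ring
        _ ≤ psi n a * (Hf n (c0 n T) s b * Bs (T := T) i s a) :=
            mul_le_mul_of_nonneg_left h1 hpa
        _ ≤ psi n b * (Hf n (c0 n T) s b * Bs (T := T) i s a) :=
            mul_le_mul_of_nonneg_right (psi_mono hn hab hbn)
              (mul_nonneg (Hf_nonneg hn hcpos.le s b) (Bs_nonneg i s a))
        _ = (psi n b * Hf n (c0 n T) s b) * Bs (T := T) i s a := by ring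
    have key := cross_le (n := n) (m := fun g => psi n g * Hf n (c0 n T) s g)
      (β := fun g => Bs (T := T) i s g) hinv hxy hy
    rw [← hH x, ← hH y, ← hB x, ← hB y] at key
    have hc2 : (0:ℝ) < cR n * cR n := mul_pos (cR_pos hn) (cR_pos hn)
    calc Hf n (c0 n T) (s+1) x * Bs (T := T) i (s+1) y
        = (cR n * cR n)⁻¹ * ((cR n * Hf n (c0 n T) (s+1) x) * (cR n * Bs (T := T) i (s+1) y)) := by
          field_simp
      _ ≤ (cR n * cR n)⁻¹ * ((cR n * Hf n (c0 n T) (s+1) y) * (cR n * Bs (T := T) i (s+1) x)) :=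
          mul_le_mul_of_nonneg_left key (inv_nonneg.mpr hc2.le)
      _ = Hf n (c0 n T) (s+1) y * Bs (T := T) i (s+1) x := by
          field_simp

/-- strict inequality at the end point -/
lemma main_strict (hn2 : 2 ≤ n) {t k k' : ℕ} (ht : 2 ≤ t) (hT : t ≤ T)
    (hk1 : 1 ≤ k) (hkk' : k < k') (hk'n : k' ≤ n) :
    Hf n (c0 n T) t k * Bs (T := T) i t k' < Hf n (c0 n T) t k' * Bs (T := T) i t k := by
  have hn : 1 ≤ n := by omega
  have hcpos := c0_pos (T := T) i
  obtain ⟨u, rfl⟩ : ∃ u, t = u + 1 := ⟨t - 1, by omega⟩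
  have hu1 : 1 ≤ u := by omega
  have hs : u < T := hT
  have hcne : cR n ≠ 0 := ne_of_gt (cR_pos hn)
  have hH : ∀ γ, cR n * Hf n (c0 n T) (u+1) γ
      = ∑ g ∈ range (n+1), kapR n g γ * (psi n g * Hf n (c0 n T) u g) := by
    intro γ
    show cR n * ((cR n)⁻¹ * _) = _
    field_simp
  have hB := fun γ => Bs_rec i hs γ
  have hinv : ∀ a b, a ≤ b → b ≤ n →
      (psi n a * Hf n (c0 n T) u a) * Bs (T := T) i u b
        ≤ (psi n b * Hf n (c0 n T) u b) * Bs (T := T) i u a := by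
    intro a b hab hbn
    have h1 := LR i hn2 u (le_of_lt hs) a b hab hbn
    have hpa := (psi_pos hn (le_trans hab hbn)).le
    calc (psi n a * Hf n (c0 n T) u a) * Bs (T := T) i u b
        = psi n a * (Hf n (c0 n T) u a * Bs (T := T) i u b) := by ring
      _ ≤ psi n a * (Hf n (c0 n T) u b * Bs (T := T) i u a) :=
          mul_le_mul_of_nonneg_left h1 hpa
      _ ≤ psi n b * (Hf n (c0 n T) u b * Bs (T := T) i u a) :=
          mul_le_mul_of_nonneg_right (psi_mono hn hab hbn)
            (mul_nonneg (Hf_nonneg hn hcpos.le u b) (Bs_nonneg i u a))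
      _ = (psi n b * Hf n (c0 n T) u b) * Bs (T := T) i u a := by ring
  have h12 : (psi n 1 * Hf n (c0 n T) u 1) * Bs (T := T) i u 2
      < (psi n 2 * Hf n (c0 n T) u 2) * Bs (T := T) i u 1 := by
    have hH1 : 0 < Hf n (c0 n T) u 1 := Hf_one_pos hn2 hcpos u
    have hB2 : 0 < Bs (T := T) i u 2 := Bs_pos i hn2 hu1 (le_of_lt hs) hn2
    have hinv12 : Hf n (c0 n T) u 1 * Bs (T := T) i u 2
        ≤ Hf n (c0 n T) u 2 * Bs (T := T) i u 1 := LR i hn2 u (le_of_lt hs) 1 2 (by omega) hn2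
    calc (psi n 1 * Hf n (c0 n T) u 1) * Bs (T := T) i u 2
        = psi n 1 * (Hf n (c0 n T) u 1 * Bs (T := T) i u 2) := by ring
      _ < psi n 2 * (Hf n (c0 n T) u 1 * Bs (T := T) i u 2) :=
          mul_lt_mul_of_pos_right (psi_strictMono hn (by omega) hn2) (mul_pos hH1 hB2)
      _ ≤ psi n 2 * (Hf n (c0 n T) u 2 * Bs (T := T) i u 1) :=
          mul_le_mul_of_nonneg_left hinv12 (psi_pos hn hn2).le
      _ = (psi n 2 * Hf n (c0 n T) u 2) * Bs (T := T) i u 1 := by ring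
  have hstp := kapR_TP2_strict hn2 hk1 hkk' hk'n
  have key := cross_lt (n := n) (m := fun g => psi n g * Hf n (c0 n T) u g)
    (β := fun g => Bs (T := T) i u g) hn2 hinv h12 (le_of_lt hkk') hk'n hstp
  rw [← hH k, ← hH k', ← hB k, ← hB k'] at key
  have hc2 : (0:ℝ) < cR n * cR n := mul_pos (cR_pos hn) (cR_pos hn)
  calc Hf n (c0 n T) (u+1) k * Bs (T := T) i (u+1) k'
      = (cR n * cR n)⁻¹ * ((cR n * Hf n (c0 n T) (u+1) k) * (cR n * Bs (T := T) i (u+1) k')) := by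
        field_simp
    _ < (cR n * cR n)⁻¹ * ((cR n * Hf n (c0 n T) (u+1) k') * (cR n * Bs (T := T) i (u+1) k)) :=
        mul_lt_mul_of_pos_left key (inv_pos.mpr hc2)
    _ = Hf n (c0 n T) (u+1) k' * Bs (T := T) i (u+1) k := by
        field_simp

end WFfinal

/-- In the diploid Wright–Fisher model with `n` individuals, for each
time `t ≥ 2`, the map `k ↦ (1/k) E[Q_t^i | G_t^i = k]` is strictly increasing for
`1 ≤ k ≤ n`. -/
theorem wf_normalized_cond_expectation_strictMono (n T t : ℕ) (hn : 0 < n)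
    (ht : 2 ≤ t) (hT : t ≤ T) (i : Fin n) (k k' : ℕ)
    (hk1 : 1 ≤ k) (hkk' : k < k') (hk'n : k' ≤ n)
    (hpos : ∃ ω : WFOmega n T, Gd n T i ω t = k)
    (hpos' : ∃ ω : WFOmega n T, Gd n T i ω t = k') :
    (1 / (k : ℝ)) *
        uCondExp (fun ω : WFOmega n T => (Qd n T i ω t : ℝ)) (fun ω => Gd n T i ω t = k)
      < (1 / (k' : ℝ)) *
        uCondExp (fun ω : WFOmega n T => (Qd n T i ω t : ℝ))
          (fun ω => Gd n T i ω t = k') := by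
  classical
  have hn2 : 2 ≤ n := by omega
  have hn1 : 1 ≤ n := by omega
  have ht1 : 1 ≤ t := by omega
  have hkn : k ≤ n := by omega
  have hBk : 0 < WFfinal.Bs (T := T) i t k := WFfinal.Bs_pos i hn2 ht1 hT hkn
  have hBk' : 0 < WFfinal.Bs (T := T) i t k' := WFfinal.Bs_pos i hn2 ht1 hT hk'n
  have huC : ∀ m : ℕ,
      uCondExp (fun ω : WFOmega n T => (Qd n T i ω t : ℝ)) (fun ω => Gd n T i ω t = m)
        = WFfinal.Gs (T := T) i t m / WFfinal.Bs (T := T) i t m := by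
    intro m
    unfold uCondExp WFfinal.Gs WFfinal.Bs
    rw [Finset.filter_congr_decidable]
  rw [huC k, huC k']
  rw [WFfinal.Gs_eq_Hf i hn1 t hT k, WFfinal.Gs_eq_Hf i hn1 t hT k']
  have hmain := WFfinal.main_strict i hn2 ht hT hk1 hkk' hk'n
  have hkne : (k:ℝ) ≠ 0 := Nat.cast_ne_zero.mpr (by omega)
  have hk'ne : (k':ℝ) ≠ 0 := Nat.cast_ne_zero.mpr (by omega)
  have hform : ∀ (m : ℕ), (m:ℝ) ≠ 0 → ∀ H B : ℝ, B ≠ 0 →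
      (1/(m:ℝ)) * (((m:ℝ) * H) / B) = H / B := by
    intro m hm H B hB
    field_simp
  rw [hform k hkne _ _ (ne_of_gt hBk), hform k' hk'ne _ _ (ne_of_gt hBk')]
  rw [div_lt_div_iff₀ hBk hBk']
  exact hmain
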